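/- Let a, b, c, g, h, p, q be real numbers with p, q > 0, c > 0, and c·e^{x} + g + h·e^{-x} > 0 for all x ≥ 0. Then ∫₀^∞ ((a + b·e^{-px})/(c·e^{px} + g + h·e^{-px}) - (a + b·e^{-qx})/(c·e^{qx} + g + h·e^{-qx}))/x dx = ((a+b)/(c+g+h)) · ln(q/p). -/

import Mathlib

open MeasureTheory Real Set Filter

noncomputable def Fden (c g h y : ℝ) : ℝ := c * Real.exp y + g + h * Real.exp (-y)
noncomputable def Ff (a b c g h y : ℝ) : ℝ := (a + b * Real.exp (-y)) / Fden c g h y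
noncomputable def Ff' (a b c g h y : ℝ) : ℝ :=
  ((-b * Real.exp (-y)) * Fden c g h y
    - (a + b * Real.exp (-y)) * (c * Real.exp y - h * Real.exp (-y))) / (Fden c g h y) ^ 2

lemma hasDerivAt_Fden (c g h y : ℝ) :
    HasDerivAt (Fden c g h) (c * Real.exp y - h * Real.exp (-y)) y := by
  have h1 : HasDerivAt (fun y : ℝ => c * Real.exp y) (c * Real.exp y) y :=
    (Real.hasDerivAt_exp y).const_mul c
  have h2 : HasDerivAt (fun y : ℝ => h * Real.exp (-y)) (-(h * Real.exp (-y))) y := by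
    have := ((Real.hasDerivAt_exp (-y)).comp y (hasDerivAt_neg y)).const_mul h
    exact this.congr_deriv (by ring)
  have := (h1.add_const g).add h2
  exact this.congr_deriv (by ring)

lemma hasDerivAt_Ff (a b c g h y : ℝ) (hy : Fden c g h y ≠ 0) :
    HasDerivAt (Ff a b c g h) (Ff' a b c g h y) y := by
  have hN : HasDerivAt (fun y : ℝ => a + b * Real.exp (-y)) (-b * Real.exp (-y)) y := by
    have := (((Real.hasDerivAt_exp (-y)).comp y (hasDerivAt_neg y)).const_mul b).const_add a
    exact this.congr_deriv (by ring)
  exact hN.div (hasDerivAt_Fden c g h y) hy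

lemma continuous_Fden (c g h : ℝ) : Continuous (Fden c g h) := by
  unfold Fden; continuity

lemma measurable_Ff' (a b c g h : ℝ) : Measurable (Ff' a b c g h) := by
  unfold Ff' Fden
  exact Measurable.div (by fun_prop) (by fun_prop)

lemma continuousAt_Ff' (a b c g h y : ℝ) (hy : Fden c g h y ≠ 0) :
    ContinuousAt (Ff' a b c g h) y := by
  unfold Ff' Fden at *
  apply ContinuousAt.div
  · fun_prop
  · fun_prop
  · exact pow_ne_zero 2 hy

lemma Fden_lower (c g h : ℝ) (hc : 0 < c)
    (hden : ∀ x : ℝ, 0 ≤ x → 0 < Fden c g h x) :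
    ∃ m > 0, ∀ y : ℝ, 0 ≤ y → m * Real.exp y ≤ Fden c g h y := by
  set M := |g| + |h| with hM
  have hM0 : 0 ≤ M := by positivity
  set R : ℝ := max 0 (Real.log (2 * M / c + 1)) with hR
  have hR0 : 0 ≤ R := le_max_left _ _
  obtain ⟨y₀, hy₀m, hy₀⟩ := (isCompact_Icc (a := (0:ℝ)) (b := R)).exists_isMinOn
    (nonempty_Icc.2 hR0) ((continuous_Fden c g h).continuousOn)
  set δ := Fden c g h y₀ with hδ
  have hδ0 : 0 < δ := hden y₀ hy₀m.1
  refine ⟨min (c / 2) (δ * Real.exp (-R)), by positivity, fun y hy => ?_⟩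
  rcases le_total y R with hyR | hyR
  · calc min (c/2) (δ * Real.exp (-R)) * Real.exp y
        ≤ δ * Real.exp (-R) * Real.exp R := by
          apply mul_le_mul (min_le_right _ _) (Real.exp_le_exp.2 hyR) (Real.exp_pos _).le
          positivity
      _ = δ := by rw [mul_assoc, ← Real.exp_add]; simp
      _ ≤ Fden c g h y := hy₀ ⟨hy, hyR⟩
  · have hexp : 2 * M / c + 1 ≤ Real.exp y := by
      calc 2 * M / c + 1 = Real.exp (Real.log (2*M/c+1)) := (Real.exp_log (by positivity)).symm
        _ ≤ Real.exp y := Real.exp_le_exp.2 (le_trans (le_max_right _ _) hyR)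
    have h1 : 2 * M ≤ c * Real.exp y := by
      have := mul_le_mul_of_nonneg_left hexp hc.le
      rw [mul_add, mul_div_cancel₀ _ hc.ne'] at this
      linarith
    have h2 : -M ≤ g + h * Real.exp (-y) := by
      have hge : -|g| ≤ g := neg_abs_le g
      have habs : |h * Real.exp (-y)| ≤ |h| := by
        rw [abs_mul, abs_of_pos (Real.exp_pos _)]
        have : Real.exp (-y) ≤ 1 := Real.exp_le_one_iff.2 (by linarith)
        nlinarith [abs_nonneg h]
      have := neg_abs_le (h * Real.exp (-y))
      linarith
    have hDeq : Fden c g h y = c * Real.exp y + (g + h * Real.exp (-y)) := by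
      unfold Fden; ring
    have hmin : min (c/2) (δ * Real.exp (-R)) * Real.exp y ≤ (c/2) * Real.exp y :=
      mul_le_mul_of_nonneg_right (min_le_left _ _) (Real.exp_pos _).le
    linarith

lemma Ff'_bound (a b c g h : ℝ) (hc : 0 < c)
    (hden : ∀ x : ℝ, 0 ≤ x → 0 < Fden c g h x) :
    ∃ K : ℝ, 0 ≤ K ∧ ∀ y : ℝ, 0 ≤ y → |Ff' a b c g h y| ≤ K * Real.exp (-y) := by
  obtain ⟨m, hm, hmle⟩ := Fden_lower c g h hc hden
  set C := (|a| + |b|) * (c + |h|) with hC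
  have hC0 : 0 ≤ C := by positivity
  refine ⟨|b| / m + C / m ^ 2, by positivity, fun y hy => ?_⟩
  have hD := hden y hy
  have hDm := hmle y hy
  set E := Real.exp y with hE
  set F := Real.exp (-y) with hF
  have hE0 : (0:ℝ) < E := Real.exp_pos y
  have hF0 : (0:ℝ) < F := Real.exp_pos _
  have hFE : F * E = 1 := by rw [hE, hF, ← Real.exp_add]; simp
  have hF1 : F ≤ 1 := Real.exp_le_one_iff.2 (by linarith)
  have hFle : F ≤ E := Real.exp_le_exp.2 (by linarith)
  set D := Fden c g h y with hDdef
  -- numerator bound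
  have hnum : |(-b * F) * D - (a + b * F) * (c * E - h * F)| ≤ |b| * F * D + C * E := by
    refine (abs_sub ((-b * F) * D) ((a + b * F) * (c * E - h * F))).trans ?_
    have e1 : |(-b * F) * D| = |b| * F * D := by
      rw [abs_mul, abs_mul, abs_neg, abs_of_pos hF0, abs_of_pos hD]
    have e2 : |(a + b * F) * (c * E - h * F)| ≤ C * E := by
      rw [abs_mul]
      have e3 : |a + b * F| ≤ |a| + |b| := by
        refine (abs_add_le _ _).trans ?_
        rw [abs_mul, abs_of_pos hF0]
        nlinarith [abs_nonneg b]
      have e4 : |c * E - h * F| ≤ (c + |h|) * E := by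
        refine (abs_sub (c * E) (h * F)).trans ?_
        rw [abs_mul, abs_mul, abs_of_pos hE0, abs_of_pos hF0, abs_of_pos hc]
        nlinarith [abs_nonneg h]
      calc |a + b * F| * |c * E - h * F| ≤ (|a| + |b|) * ((c + |h|) * E) := by
            apply mul_le_mul e3 e4 (abs_nonneg _) (by positivity)
        _ = C * E := by rw [hC]; ring
    linarith
  have habsf : |Ff' a b c g h y| = |(-b * F) * D - (a + b * F) * (c * E - h * F)| / D ^ 2 := by
    rw [Ff', abs_div, abs_of_pos (by positivity : (0:ℝ) < (Fden c g h y) ^ 2)]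
  rw [habsf, div_le_iff₀ (by positivity : (0:ℝ) < D ^ 2)]
  -- key inequalities
  have k1 : |b| * F * D ≤ (|b| / m) * F * D ^ 2 := by
    have h1 : m * E * D ≤ D * D := mul_le_mul_of_nonneg_right hDm hD.le
    have h2 : (|b| / m) * F * (m * E * D) ≤ (|b| / m) * F * (D * D) :=
      mul_le_mul_of_nonneg_left h1 (by positivity)
    have h3 : (|b| / m) * F * (m * E * D) = |b| * D := by
      rw [show (|b| / m) * F * (m * E * D) = |b| * D * (F * E) * (m / m) by ring, hFE,
        div_self hm.ne']
      ring
    have h4 : |b| * F * D ≤ |b| * D := by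
      nlinarith [mul_nonneg (mul_nonneg (abs_nonneg b) (sub_nonneg.2 hF1)) hD.le]
    have hsq : D * D = D ^ 2 := (sq D).symm
    linarith
  have k2 : C * E ≤ (C / m ^ 2) * F * D ^ 2 := by
    have h1 : (m * E) ^ 2 ≤ D ^ 2 := pow_le_pow_left₀ (by positivity) hDm 2
    have h2 : (C / m ^ 2) * F * ((m * E) ^ 2) ≤ (C / m ^ 2) * F * D ^ 2 :=
      mul_le_mul_of_nonneg_left h1 (by positivity)
    have h3 : (C / m ^ 2) * F * ((m * E) ^ 2) = C * E := by
      rw [show (C / m ^ 2) * F * ((m * E) ^ 2) = C * E * (F * E) * (m ^ 2 / m ^ 2) by ring, hFE,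
        div_self (by positivity)]
      ring
    linarith
  have hexpand : (|b| / m + C / m ^ 2) * F * D ^ 2
      = (|b| / m) * F * D ^ 2 + (C / m ^ 2) * F * D ^ 2 := by ring
  linarith

lemma integrableOn_Ff' (a b c g h : ℝ) (hc : 0 < c)
    (hden : ∀ x : ℝ, 0 ≤ x → 0 < Fden c g h x) :
    IntegrableOn (Ff' a b c g h) (Ioi (0:ℝ)) := by
  obtain ⟨K, hK0, hK⟩ := Ff'_bound a b c g h hc hden
  have hint : IntegrableOn (fun y => K * Real.exp (-(1 * y))) (Ioi (0:ℝ)) := by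
    have := (exp_neg_integrableOn_Ioi 0 one_pos).const_mul K
    simpa [neg_mul, IntegrableOn] using this
  apply Integrable.mono' hint ((measurable_Ff' a b c g h).aestronglyMeasurable)
  filter_upwards [ae_restrict_mem measurableSet_Ioi] with y hy
  simpa using hK y (le_of_lt hy)

lemma tendsto_Fden (c g h : ℝ) (hc : 0 < c) :
    Tendsto (Fden c g h) atTop atTop := by
  have h1 : Tendsto (fun y : ℝ => c * Real.exp y) atTop atTop :=
    Real.tendsto_exp_atTop.const_mul_atTop hc
  have h2 : ∀ᶠ y : ℝ in atTop, g - |h| ≤ g + h * Real.exp (-y) := by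
    filter_upwards [eventually_ge_atTop (0:ℝ)] with y hy
    have h3 : Real.exp (-y) ≤ 1 := Real.exp_le_one_iff.2 (by linarith)
    have h4 : |h * Real.exp (-y)| ≤ |h| := by
      rw [abs_mul, abs_of_pos (Real.exp_pos _)]
      nlinarith [abs_nonneg h]
    have := neg_abs_le (h * Real.exp (-y))
    linarith
  have := tendsto_atTop_add_right_of_le' atTop (g - |h|) h1 h2
  refine this.congr fun y => ?_
  unfold Fden; ring

lemma tendsto_Ff (a b c g h : ℝ) (hc : 0 < c) :
    Tendsto (Ff a b c g h) atTop (nhds 0) := by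
  have hnum : Tendsto (fun y : ℝ => a + b * Real.exp (-y)) atTop (nhds (a + b * 0)) :=
    tendsto_const_nhds.add (Real.tendsto_exp_neg_atTop_nhds_zero.const_mul b)
  exact Filter.Tendsto.div_atTop hnum (tendsto_Fden c g h hc)

lemma integral_Ff' (a b c g h : ℝ) (hc : 0 < c)
    (hden : ∀ x : ℝ, 0 ≤ x → 0 < Fden c g h x) :
    ∫ y in Ioi (0:ℝ), Ff' a b c g h y = -(Ff a b c g h 0) := by
  have := integral_Ioi_of_hasDerivAt_of_tendsto' (a := (0:ℝ))
    (f := Ff a b c g h) (f' := Ff' a b c g h)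
    (fun y hy => hasDerivAt_Ff a b c g h y (ne_of_gt (hden y hy)))
    (integrableOn_Ff' a b c g h hc hden) (tendsto_Ff a b c g h hc)
  simpa using this

lemma pointwise_eq (a b c g h p q x : ℝ) (hp : 0 < p) (hq : 0 < q)
    (hden : ∀ y : ℝ, 0 ≤ y → 0 < Fden c g h y) (hx : 0 < x) :
    (Ff a b c g h (p * x) - Ff a b c g h (q * x)) / x
      = -∫ t in p..q, Ff' a b c g h (t * x) := by
  have hmem : ∀ t ∈ uIcc p q, 0 < t := fun t ht => lt_of_lt_of_le (lt_min hp hq) ht.1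
  have hderiv : ∀ t ∈ uIcc p q,
      HasDerivAt (fun t => Ff a b c g h (t * x)) (x * Ff' a b c g h (t * x)) t := by
    intro t ht
    have htx : 0 < t * x := mul_pos (hmem t ht) hx
    have h1 := (hasDerivAt_Ff a b c g h (t * x) (ne_of_gt (hden _ htx.le))).comp t
      (hasDerivAt_mul_const x)
    exact h1.congr_deriv (by ring)
  have hcont : ContinuousOn (fun t => x * Ff' a b c g h (t * x)) (uIcc p q) := by
    intro t ht
    have htx : 0 < t * x := mul_pos (hmem t ht) hx
    have hmul : ContinuousAt (fun t : ℝ => t * x) t := by fun_prop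
    have h2 : ContinuousAt (fun t : ℝ => Ff' a b c g h (t * x)) t :=
      ContinuousAt.comp (g := Ff' a b c g h) (f := fun t : ℝ => t * x)
        (continuousAt_Ff' a b c g h (t * x) (ne_of_gt (hden _ htx.le))) hmul
    exact (continuousAt_const.mul h2).continuousWithinAt
  have key := intervalIntegral.integral_eq_sub_of_hasDerivAt hderiv
    (hcont.intervalIntegrable)
  rw [intervalIntegral.integral_const_mul] at key
  rw [div_eq_iff hx.ne']
  linear_combination key

lemma frullani_core (a b c g h p q : ℝ) (hp : 0 < p) (hq : 0 < q) (hpq : p ≤ q) (hc : 0 < c)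
    (hden : ∀ x : ℝ, 0 ≤ x → 0 < Fden c g h x) :
    ∫ x in Ioi (0:ℝ), (Ff a b c g h (p * x) - Ff a b c g h (q * x)) / x
      = Ff a b c g h 0 * (Real.log q - Real.log p) := by
  have hrw : ∀ x ∈ Ioi (0:ℝ), (Ff a b c g h (p * x) - Ff a b c g h (q * x)) / x
      = -∫ t in Ioc p q, Ff' a b c g h (t * x) := by
    intro x hx
    rw [← intervalIntegral.integral_of_le hpq]
    exact pointwise_eq a b c g h p q x hp hq hden hx
  rw [setIntegral_congr_fun measurableSet_Ioi hrw, integral_neg]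
  -- Fubini
  have hInt : Integrable (Function.uncurry fun x t => Ff' a b c g h (t * x))
      ((volume.restrict (Ioi (0:ℝ))).prod (volume.restrict (Ioc p q))) := by
    obtain ⟨K, hK0, hK⟩ := Ff'_bound a b c g h hc hden
    have hbound : Integrable (fun z : ℝ × ℝ => (K * Real.exp (-(p * z.1))) * 1)
        ((volume.restrict (Ioi (0:ℝ))).prod (volume.restrict (Ioc p q))) := by
      have h1 : Integrable (fun x => K * Real.exp (-(p * x))) (volume.restrict (Ioi (0:ℝ))) := by
        have := (exp_neg_integrableOn_Ioi 0 hp).const_mul K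
        simpa [neg_mul] using this
      have h2 : Integrable (fun _ : ℝ => (1:ℝ)) (volume.restrict (Ioc p q)) := integrable_const 1
      exact h1.mul_prod h2
    apply Integrable.mono' hbound
    · exact ((measurable_Ff' a b c g h).comp
        (measurable_snd.mul measurable_fst)).aestronglyMeasurable
    · rw [Measure.prod_restrict]
      filter_upwards [ae_restrict_mem (measurableSet_Ioi.prod measurableSet_Ioc)] with z hz
      have hz1 : 0 < z.1 := hz.1
      have hz2 : p < z.2 := hz.2.1
      have htx : 0 ≤ z.2 * z.1 := mul_nonneg (lt_trans hp hz2).le hz1.le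
      have h1 : |Ff' a b c g h (z.2 * z.1)| ≤ K * Real.exp (-(z.2 * z.1)) := hK _ htx
      have h2 : Real.exp (-(z.2 * z.1)) ≤ Real.exp (-(p * z.1)) := by
        apply Real.exp_le_exp.2
        nlinarith
      have : ‖Function.uncurry (fun x t => Ff' a b c g h (t * x)) z‖
          = |Ff' a b c g h (z.2 * z.1)| := by
        simp [Function.uncurry, Real.norm_eq_abs]
      rw [this]
      calc |Ff' a b c g h (z.2 * z.1)| ≤ K * Real.exp (-(z.2 * z.1)) := h1
        _ ≤ K * Real.exp (-(p * z.1)) * 1 := by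
            rw [mul_one]; exact mul_le_mul_of_nonneg_left h2 hK0
  rw [integral_integral_swap hInt]
  have hinner : ∀ t ∈ Ioc p q, (∫ x in Ioi (0:ℝ), Ff' a b c g h (t * x))
      = t⁻¹ * (-(Ff a b c g h 0)) := by
    intro t ht
    have ht0 : 0 < t := lt_trans hp ht.1
    have := integral_comp_mul_left_Ioi (Ff' a b c g h) 0 ht0
    rw [mul_zero] at this
    rw [this, integral_Ff' a b c g h hc hden, smul_eq_mul]
  rw [setIntegral_congr_fun measurableSet_Ioc hinner]
  have : (∫ t in Ioc p q, t⁻¹ * (-(Ff a b c g h 0)))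
      = (∫ t in Ioc p q, t⁻¹) * (-(Ff a b c g h 0)) := integral_mul_const _ _
  rw [this, ← intervalIntegral.integral_of_le hpq,
    integral_inv (by simp [Set.uIcc_of_le hpq, mem_Icc]; intro h'; linarith : (0:ℝ) ∉ Set.uIcc p q),
    Real.log_div hq.ne' hp.ne']
  ring

theorem frullani_rational_exp (a b c g h p q : ℝ) (hp : 0 < p) (hq : 0 < q) (hc : 0 < c)
    (hden : ∀ x : ℝ, 0 ≤ x → 0 < c * Real.exp x + g + h * Real.exp (-x)) :
    ∫ x in Ioi (0:ℝ),
      ((a + b * Real.exp (-p * x)) / (c * Real.exp (p * x) + g + h * Real.exp (-p * x))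
        - (a + b * Real.exp (-q * x)) / (c * Real.exp (q * x) + g + h * Real.exp (-q * x))) / x
      = ((a + b) / (c + g + h)) * Real.log (q / p) := by
  have hden' : ∀ x : ℝ, 0 ≤ x → 0 < Fden c g h x := by
    intro x hx; unfold Fden; exact hden x hx
  have hrw : (fun x : ℝ =>
      ((a + b * Real.exp (-p * x)) / (c * Real.exp (p * x) + g + h * Real.exp (-p * x))
        - (a + b * Real.exp (-q * x)) / (c * Real.exp (q * x) + g + h * Real.exp (-q * x))) / x)
      = fun x => (Ff a b c g h (p * x) - Ff a b c g h (q * x)) / x := by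
    funext x
    simp [Ff, Fden, neg_mul]
  rw [hrw]
  have h0 : Ff a b c g h 0 = (a + b) / (c + g + h) := by
    simp [Ff, Fden]
  rw [Real.log_div hq.ne' hp.ne']
  rcases le_total p q with hpq | hpq
  · rw [frullani_core a b c g h p q hp hq hpq hc hden', h0]
  · have hneg : (fun x : ℝ => (Ff a b c g h (p * x) - Ff a b c g h (q * x)) / x)
        = fun x => -((Ff a b c g h (q * x) - Ff a b c g h (p * x)) / x) := by
      funext x; ring
    rw [hneg, integral_neg, frullani_core a b c g h q p hq hp hpq hc hden', h0]
    ring
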